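/- Let (S, 𝓕) be a measurable space, let P be a probability measure on it, let g : S → ℝ be bounded and measurable, and let 0 < β < γ. Then (1/γ)·log ∫ e^{γ g} dP = sup over all probability measures Q on (S,𝓕) of [ (1/β)·log ∫ e^{β g} dQ − (1/(γ−β))·R_{γ/(γ−β)}(Q‖P) ]. -/

import Mathlib

open MeasureTheory Classical

/-- The Rényi divergence of degree `α` of `Q` with respect to `P`:
`R_α(Q‖P) = (1/(α(α−1)))·log ∫ (dQ/dP)^α dP` if `Q ≪ P`, and `+∞` otherwise. -/
noncomputable def renyiDiv {S : Type*} [MeasurableSpace S] (α : ℝ)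
    (Q P : Measure S) : EReal :=
  if Q ≪ P then
    (((α * (α - 1))⁻¹ : ℝ) : EReal) * ENNReal.log (∫⁻ x, Q.rnDeriv P x ^ α ∂P)
  else ⊤

section RenyiAux
open scoped ENNReal
open Real

variable {S : Type*} [MeasurableSpace S]

lemma integrable_exp_mul (Q : Measure S) [IsProbabilityMeasure Q] {g : S → ℝ}
    (hg : Measurable g) {M : ℝ} (hM : ∀ x, |g x| ≤ M) (c : ℝ) :
    Integrable (fun x => Real.exp (c * g x)) Q := by
  refine (integrable_const (Real.exp (|c| * M))).mono'
    ((hg.const_mul c).exp.aestronglyMeasurable) (ae_of_all _ fun x => ?_)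
  rw [Real.norm_eq_abs, abs_of_pos (Real.exp_pos _)]
  refine Real.exp_le_exp.2 ?_
  calc c * g x ≤ |c * g x| := le_abs_self _
    _ = |c| * |g x| := abs_mul _ _
    _ ≤ |c| * M := by
        exact mul_le_mul_of_nonneg_left (hM x) (abs_nonneg _)

lemma lintegral_exp_mul (Q : Measure S) [IsProbabilityMeasure Q] {g : S → ℝ}
    (hg : Measurable g) {M : ℝ} (hM : ∀ x, |g x| ≤ M) (c : ℝ) :
    ∫⁻ x, ENNReal.ofReal (Real.exp (c * g x)) ∂Q
      = ENNReal.ofReal (∫ x, Real.exp (c * g x) ∂Q) :=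
  (ofReal_integral_eq_lintegral_ofReal (integrable_exp_mul Q hg hM c)
    (ae_of_all _ fun x => (Real.exp_pos _).le)).symm

lemma Z_pos (Q : Measure S) [IsProbabilityMeasure Q] {g : S → ℝ}
    (hg : Measurable g) {M : ℝ} (hM : ∀ x, |g x| ≤ M) (c : ℝ) :
    0 < ∫ x, Real.exp (c * g x) ∂Q :=
  integral_exp_pos (integrable_exp_mul Q hg hM c)

lemma renyi_upper (P : Measure S) [IsProbabilityMeasure P] {β γ : ℝ} (hβ : 0 < β)
    (hβγ : β < γ) {g : S → ℝ} (hg : Measurable g) {M : ℝ} (hM : ∀ x, |g x| ≤ M)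
    (Q : Measure S) [IsProbabilityMeasure Q] :
    ((β⁻¹ * Real.log (∫ x, Real.exp (β * g x) ∂Q) : ℝ) : EReal)
      - (((γ - β)⁻¹ : ℝ) : EReal) * renyiDiv (γ / (γ - β)) Q P
      ≤ ((γ⁻¹ * Real.log (∫ x, Real.exp (γ * g x) ∂P) : ℝ) : EReal) := by
  have hδ : 0 < γ - β := sub_pos.2 hβγ
  have hγ : 0 < γ := hβ.trans hβγ
  set α : ℝ := γ / (γ - β) with hα_def
  have hα1 : 1 < α := (one_lt_div hδ).2 (by linarith)
  have hα0 : 0 < α := lt_trans one_pos hα1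
  have hc1 : 0 < (α * (α - 1))⁻¹ := inv_pos.2 (mul_pos hα0 (by linarith))
  by_cases hQP : Q ≪ P
  · rw [renyiDiv, if_pos hQP]
    set I : ℝ≥0∞ := ∫⁻ x, (Q.rnDeriv P x) ^ α ∂P with hI_def
    by_cases hI : I = ⊤
    · rw [hI, ENNReal.log_top, EReal.coe_mul_top_of_pos hc1,
        EReal.coe_mul_top_of_pos (inv_pos.2 hδ), EReal.sub_top]
      exact bot_le
    · -- Hölder's inequality
      have hconj : Real.HolderConjugate (γ / β) α := by
        rw [Real.holderConjugate_iff]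
        constructor
        · exact (one_lt_div hβ).2 hβγ
        · rw [hα_def]
          field_simp
          ring
      set f1 : S → ℝ≥0∞ := fun x => ENNReal.ofReal (Real.exp (β * g x)) with hf1_def
      have hf1m : Measurable f1 := (hg.const_mul β).exp.ennreal_ofReal
      have holder := ENNReal.lintegral_mul_le_Lp_mul_Lq P hconj hf1m.aemeasurable
        (Q.measurable_rnDeriv P).aemeasurable
      set A : ℝ := ∫ x, Real.exp (β * g x) ∂Q with hA_def
      set Zγ : ℝ := ∫ x, Real.exp (γ * g x) ∂P with hZγ_def
      have hA : 0 < A := Z_pos Q hg hM β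
      have hZγ : 0 < Zγ := Z_pos P hg hM γ
      have e1 : ∫⁻ x, (f1 * (Q.rnDeriv P)) x ∂P = ENNReal.ofReal A := by
        calc ∫⁻ x, (f1 * (Q.rnDeriv P)) x ∂P
            = ∫⁻ x, Q.rnDeriv P x * f1 x ∂P := by
              simp only [Pi.mul_apply, mul_comm]
          _ = ∫⁻ x, f1 x ∂Q := lintegral_rnDeriv_mul hQP hf1m.aemeasurable
          _ = ENNReal.ofReal A := lintegral_exp_mul Q hg hM β
      have e2 : ∫⁻ x, f1 x ^ (γ / β) ∂P = ENNReal.ofReal Zγ := by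
        have : ∀ x, f1 x ^ (γ / β) = ENNReal.ofReal (Real.exp (γ * g x)) := by
          intro x
          simp only [hf1_def]
          rw [ENNReal.ofReal_rpow_of_pos (Real.exp_pos _), ← Real.exp_mul]
          congr 1
          field_simp
        simp_rw [this]
        exact lintegral_exp_mul P hg hM γ
      rw [e1, e2] at holder
      have h1dd : 1 / (γ / β) = β / γ := one_div_div _ _
      rw [h1dd] at holder
      -- I ≠ 0
      have hI0 : I ≠ 0 := by
        intro h0
        rw [← hI_def, h0, ENNReal.zero_rpow_of_pos (by positivity), mul_zero,
          nonpos_iff_eq_zero, ENNReal.ofReal_eq_zero] at holder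
        linarith
      have hIt : 0 < I.toReal := ENNReal.toReal_pos hI0 hI
      -- real version of Hölder
      have hRne : ENNReal.ofReal Zγ ^ (β / γ) * I ^ (1 / α) ≠ ⊤ :=
        ENNReal.mul_ne_top (ENNReal.rpow_ne_top_of_nonneg (by positivity) ENNReal.ofReal_ne_top)
          (ENNReal.rpow_ne_top_of_nonneg (by positivity) hI)
      have hreal : A ≤ Zγ ^ (β / γ) * I.toReal ^ (1 / α) := by
        have := ENNReal.toReal_mono hRne holder
        rwa [ENNReal.toReal_ofReal hA.le, ENNReal.toReal_mul, ← ENNReal.toReal_rpow,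
          ← ENNReal.toReal_rpow, ENNReal.toReal_ofReal hZγ.le] at this
      have hlog : Real.log A ≤ β / γ * Real.log Zγ + α⁻¹ * Real.log I.toReal := by
        have := Real.log_le_log hA hreal
        rwa [Real.log_mul (by positivity) (by positivity), Real.log_rpow hZγ,
          Real.log_rpow hIt, one_div] at this
      rw [ENNReal.log_pos_real' hIt]
      rw [← EReal.coe_mul, ← EReal.coe_mul, ← EReal.coe_sub, EReal.coe_le_coe_iff]
      have h2 : β⁻¹ * Real.log A
          ≤ β⁻¹ * (β / γ * Real.log Zγ + α⁻¹ * Real.log I.toReal) :=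
        mul_le_mul_of_nonneg_left hlog (inv_nonneg.2 hβ.le)
      have h3 : β⁻¹ * (β / γ * Real.log Zγ + α⁻¹ * Real.log I.toReal)
          = γ⁻¹ * Real.log Zγ + (γ - β)⁻¹ * ((α * (α - 1))⁻¹ * Real.log I.toReal) := by
        rw [hα_def]
        field_simp
        have hb : β * β⁻¹ = 1 := mul_inv_cancel₀ hβ.ne'
        linear_combination (-(γ - β) * Real.log I.toReal) * hb
      linarith
  · rw [renyiDiv, if_neg hQP, EReal.coe_mul_top_of_pos (inv_pos.2 hδ), EReal.sub_top]
    exact bot_le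

lemma renyi_attained (P : Measure S) [IsProbabilityMeasure P] {β γ : ℝ} (hβ : 0 < β)
    (hβγ : β < γ) {g : S → ℝ} (hg : Measurable g) {M : ℝ} (hM : ∀ x, |g x| ≤ M) :
    ∃ (Q : Measure S) (_ : IsProbabilityMeasure Q),
      ((β⁻¹ * Real.log (∫ x, Real.exp (β * g x) ∂Q) : ℝ) : EReal)
        - (((γ - β)⁻¹ : ℝ) : EReal) * renyiDiv (γ / (γ - β)) Q P
        = ((γ⁻¹ * Real.log (∫ x, Real.exp (γ * g x) ∂P) : ℝ) : EReal) := by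
  have hδ : 0 < γ - β := sub_pos.2 hβγ
  have hγ : 0 < γ := hβ.trans hβγ
  set α : ℝ := γ / (γ - β) with hα_def
  have hα1 : 1 < α := (one_lt_div hδ).2 (by linarith)
  have hα0 : 0 < α := lt_trans one_pos hα1
  set Z' : ℝ := ∫ x, Real.exp ((γ - β) * g x) ∂P with hZ'_def
  set Zγ : ℝ := ∫ x, Real.exp (γ * g x) ∂P with hZγ_def
  have hZ' : 0 < Z' := Z_pos P hg hM (γ - β)
  have hZγ : 0 < Zγ := Z_pos P hg hM γ
  have hZ'0 : ENNReal.ofReal Z' ≠ 0 := by simp [hZ']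
  have hZ't : ENNReal.ofReal Z' ≠ ⊤ := ENNReal.ofReal_ne_top
  set d : S → ℝ≥0∞ := fun x => ENNReal.ofReal (Real.exp ((γ - β) * g x)) / ENNReal.ofReal Z'
    with hd_def
  have hdm : Measurable d := ((hg.const_mul (γ - β)).exp.ennreal_ofReal).div measurable_const
  have hint : ∫⁻ x, d x ∂P = 1 := by
    simp only [hd_def, div_eq_mul_inv]
    rw [lintegral_mul_const _ (hg.const_mul (γ - β)).exp.ennreal_ofReal,
      lintegral_exp_mul P hg hM (γ - β), ← hZ'_def, ENNReal.mul_inv_cancel hZ'0 hZ't]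
  set Q : Measure S := P.withDensity d with hQ_def
  have hQprob : IsProbabilityMeasure Q := by
    constructor
    rw [hQ_def, withDensity_apply d MeasurableSet.univ, setLIntegral_univ, hint]
  have hQP : Q ≪ P := withDensity_absolutelyContinuous P d
  have hrn : Q.rnDeriv P =ᵐ[P] d := Measure.rnDeriv_withDensity P hdm
  -- the Rényi integral
  have hIcalc : ∫⁻ x, Q.rnDeriv P x ^ α ∂P = ENNReal.ofReal (Zγ / Z' ^ α) := by
    have h1 : ∫⁻ x, Q.rnDeriv P x ^ α ∂P = ∫⁻ x, d x ^ α ∂P :=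
      lintegral_congr_ae (hrn.mono fun x h => by simp only [h])
    have h2 : ∀ x, d x ^ α
        = ENNReal.ofReal (Real.exp (γ * g x)) * (ENNReal.ofReal (Z' ^ α))⁻¹ := by
      intro x
      rw [hd_def]
      simp only
      rw [ENNReal.div_rpow_of_nonneg _ _ hα0.le, ENNReal.ofReal_rpow_of_pos (Real.exp_pos _),
        ENNReal.ofReal_rpow_of_pos hZ', ← Real.exp_mul, div_eq_mul_inv]
      have hga : (γ - β) * α = γ := by rw [hα_def]; field_simp
      congr 2
      rw [Real.exp_eq_exp]
      linear_combination g x * hga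
    rw [h1]
    simp_rw [h2]
    rw [lintegral_mul_const _ (hg.const_mul γ).exp.ennreal_ofReal,
      lintegral_exp_mul P hg hM γ, ← hZγ_def, ← div_eq_mul_inv,
      ← ENNReal.ofReal_div_of_pos (Real.rpow_pos_of_pos hZ' α)]
  -- the Gibbs integral
  have hAcalc : ∫ x, Real.exp (β * g x) ∂Q = Zγ / Z' := by
    have h1 : ENNReal.ofReal (∫ x, Real.exp (β * g x) ∂Q)
        = ∫⁻ x, ENNReal.ofReal (Real.exp (β * g x)) ∂Q :=
      (lintegral_exp_mul Q hg hM β).symm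
    have h2 : ∫⁻ x, ENNReal.ofReal (Real.exp (β * g x)) ∂Q
        = ∫⁻ x, (d * fun y => ENNReal.ofReal (Real.exp (β * g y))) x ∂P := by
      rw [hQ_def, lintegral_withDensity_eq_lintegral_mul P hdm
        (hg.const_mul β).exp.ennreal_ofReal]
    have h3 : ∀ x, (d * fun y => ENNReal.ofReal (Real.exp (β * g y))) x
        = ENNReal.ofReal (Real.exp (γ * g x)) * (ENNReal.ofReal Z')⁻¹ := by
      intro x
      simp only [Pi.mul_apply, hd_def, div_eq_mul_inv]
      rw [mul_right_comm, ← ENNReal.ofReal_mul (Real.exp_pos _).le, ← Real.exp_add]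
      congr 3
      ring
    rw [h2] at h1
    simp_rw [h3] at h1
    rw [lintegral_mul_const _ (hg.const_mul γ).exp.ennreal_ofReal,
      lintegral_exp_mul P hg hM γ, ← hZγ_def, ← div_eq_mul_inv,
      ← ENNReal.ofReal_div_of_pos hZ'] at h1
    have hAnn : 0 ≤ ∫ x, Real.exp (β * g x) ∂Q :=
      integral_nonneg fun x => (Real.exp_pos _).le
    exact (ENNReal.ofReal_eq_ofReal_iff hAnn (by positivity)).1 h1
  refine ⟨Q, hQprob, ?_⟩
  rw [renyiDiv, if_pos hQP, hIcalc, ENNReal.log_ofReal_of_pos (by positivity), hAcalc]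
  rw [← EReal.coe_mul, ← EReal.coe_mul, ← EReal.coe_sub, EReal.coe_eq_coe_iff]
  have hlogd : Real.log (Zγ / Z' ^ α) = Real.log Zγ - α * Real.log Z' := by
    rw [Real.log_div hZγ.ne' (ne_of_gt (Real.rpow_pos_of_pos hZ' α)), Real.log_rpow hZ']
  rw [hlogd, Real.log_div hZγ.ne' hZ'.ne', hα_def]
  field_simp
  have hb : β * β⁻¹ = 1 := mul_inv_cancel₀ hβ.ne'
  linear_combination (Real.log Zγ * β - Real.log Zγ * γ + Real.log Z' * γ) * hb

end RenyiAux

/-- Variational formula with two risk parameters: for `0 < β < γ`,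
`(1/γ)·log ∫ e^{γg} dP = sup_Q [ (1/β)·log ∫ e^{βg} dQ − (1/(γ−β))·R_{γ/(γ−β)}(Q‖P) ]`,
the supremum being over all probability measures `Q`. -/
theorem renyi_variational_formula_two_params {S : Type*} [MeasurableSpace S]
    (P : Measure S) [IsProbabilityMeasure P] (β γ : ℝ) (hβ : 0 < β) (hβγ : β < γ)
    (g : S → ℝ) (hg : Measurable g) (hbd : ∃ M : ℝ, ∀ x, |g x| ≤ M) :
    ((γ⁻¹ * Real.log (∫ x, Real.exp (γ * g x) ∂P) : ℝ) : EReal) =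
      ⨆ Q : {Q : Measure S // IsProbabilityMeasure Q},
        ((β⁻¹ * Real.log (∫ x, Real.exp (β * g x) ∂(Q : Measure S)) : ℝ) : EReal)
          - (((γ - β)⁻¹ : ℝ) : EReal) * renyiDiv (γ / (γ - β)) (Q : Measure S) P := by
  obtain ⟨M, hM⟩ := hbd
  apply le_antisymm
  · obtain ⟨Q, hQprob, hEq⟩ := renyi_attained P hβ hβγ hg hM
    exact le_iSup_of_le (⟨Q, hQprob⟩ : {Q : Measure S // IsProbabilityMeasure Q}) hEq.ge
  · refine iSup_le fun Q => ?_
    haveI := Q.2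
    exact renyi_upper P hβ hβγ hg hM Q.1
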